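/- Let a, b > 1 and p_o := (a−1)/(a+b−2). Then for all x ≥ p_o, B̄_{a,b}(x) ≤ 2 Φ(−2√(a+b−2)·(x − p_o)), and for all x ≤ p_o, B_{a,b}(x) ≤ 2 Φ(2√(a+b−2)·(x − p_o)). -/

import Mathlib

open MeasureTheory

/-- The Beta function `B(a,b) = ∫₀¹ t^{a-1} (1-t)^{b-1} dt`. -/
noncomputable def betaFn (a b : ℝ) : ℝ :=
  ∫ t in (0:ℝ)..1, t ^ (a - 1) * (1 - t) ^ (b - 1)

/-- Density of the Beta(a,b) distribution. -/
noncomputable def betaPDF (a b t : ℝ) : ℝ :=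
  if 0 < t ∧ t < 1 then (betaFn a b)⁻¹ * t ^ (a - 1) * (1 - t) ^ (b - 1) else 0

/-- Distribution function of the Beta(a,b) distribution. -/
noncomputable def betaCDF (a b x : ℝ) : ℝ := ∫ t in Set.Iic x, betaPDF a b t

/-- Standard normal distribution function `Φ`. -/
noncomputable def stdNormalCDF (z : ℝ) : ℝ :=
  ∫ t in Set.Iic z, (Real.sqrt (2 * Real.pi))⁻¹ * Real.exp (-t ^ 2 / 2)

namespace BetaTail

open Set Real

noncomputable def f (a b t : ℝ) : ℝ := t ^ (a - 1) * (1 - t) ^ (b - 1)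

noncomputable def p (a b : ℝ) : ℝ := (a - 1) / (a + b - 2)

noncomputable def w (a b t : ℝ) : ℝ := Real.exp (-(2 * (a + b - 2)) * (t - p a b) ^ 2)

noncomputable def r (a b t : ℝ) : ℝ := f a b t * Real.exp (2 * (a + b - 2) * (t - p a b) ^ 2)

noncomputable def W (a b x : ℝ) : ℝ := ∫ v in Set.Ioi x, w a b v

lemma f_eq_r_mul_w (a b t : ℝ) : f a b t = r a b t * w a b t := by
  rw [r, w, mul_assoc, ← Real.exp_add]
  ring_nf
  rw [Real.exp_zero, mul_one]

lemma p_pos {a b : ℝ} (ha : 1 < a) (hb : 1 < b) : 0 < p a b :=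
  div_pos (by linarith) (by linarith)

lemma p_lt_one {a b : ℝ} (ha : 1 < a) (hb : 1 < b) : p a b < 1 := by
  rw [p, div_lt_one (by linarith)]; linarith

lemma f_nonneg {a b t : ℝ} (h0 : 0 ≤ t) (h1 : t ≤ 1) : 0 ≤ f a b t :=
  mul_nonneg (Real.rpow_nonneg h0 _) (Real.rpow_nonneg (by linarith) _)

lemma f_pos {a b t : ℝ} (h0 : 0 < t) (h1 : t < 1) : 0 < f a b t :=
  mul_pos (Real.rpow_pos_of_pos h0 _) (Real.rpow_pos_of_pos (by linarith) _)

lemma f_le_one {a b t : ℝ} (ha : 1 < a) (hb : 1 < b) (h0 : 0 ≤ t) (h1 : t ≤ 1) :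
    f a b t ≤ 1 := by
  have h1' : 0 ≤ 1 - t := by linarith
  have k1 : t ^ (a-1) ≤ 1 := Real.rpow_le_one h0 h1 (by linarith)
  have k2 : (1-t) ^ (b-1) ≤ 1 := Real.rpow_le_one h1' (by linarith) (by linarith)
  calc f a b t ≤ 1 * 1 :=
        mul_le_mul k1 k2 (Real.rpow_nonneg h1' _) (by norm_num)
    _ = 1 := by norm_num

lemma f_meas (a b : ℝ) : Measurable (f a b) := by unfold f; fun_prop

lemma f_int {a b : ℝ} (ha : 1 < a) (hb : 1 < b) {s : Set ℝ} (hs : MeasurableSet s)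
    (hsub : s ⊆ Set.Icc 0 1) : IntegrableOn (f a b) s := by
  refine Integrable.mono' (g := fun _ => (1:ℝ)) ?_ (f_meas a b).aestronglyMeasurable ?_
  · exact integrableOn_const ((measure_mono hsub).trans_lt (by
      rw [Real.volume_Icc]; exact ENNReal.ofReal_lt_top)).ne
  · refine (ae_restrict_iff' hs).2 (ae_of_all _ fun t ht => ?_)
    have h2 := hsub ht
    rw [Real.norm_eq_abs, abs_of_nonneg (f_nonneg h2.1 h2.2)]
    exact f_le_one ha hb h2.1 h2.2

lemma Z_eq (a b : ℝ) : betaFn a b = ∫ t in Set.Ioo 0 1, f a b t := by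
  rw [betaFn, intervalIntegral.integral_of_le zero_le_one, ← integral_Ioc_eq_integral_Ioo]; rfl

lemma Z_pos {a b : ℝ} (ha : 1 < a) (hb : 1 < b) : 0 < betaFn a b := by
  rw [betaFn]
  refine intervalIntegral.intervalIntegral_pos_of_pos_on ?_
    (fun x hx => f_pos hx.1 hx.2) one_pos
  rw [intervalIntegrable_iff_integrableOn_Ioc_of_le zero_le_one,
    integrableOn_Ioc_iff_integrableOn_Ioo]
  exact f_int ha hb measurableSet_Ioo Set.Ioo_subset_Icc_self

lemma pdf_eq (a b : ℝ) :
    betaPDF a b = (Set.Ioo 0 1).indicator (fun t => (betaFn a b)⁻¹ * f a b t) := by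
  funext t
  rw [Set.indicator_apply, betaPDF]
  by_cases h : 0 < t ∧ t < 1
  · rw [if_pos h, if_pos (by exact h), f, mul_assoc]
  · rw [if_neg h, if_neg (by exact h)]

lemma pdf_int {a b : ℝ} (ha : 1 < a) (hb : 1 < b) : Integrable (betaPDF a b) := by
  rw [pdf_eq]
  exact IntegrableOn.integrable_indicator
    ((f_int ha hb measurableSet_Ioo Set.Ioo_subset_Icc_self).const_mul _) measurableSet_Ioo

lemma pdf_total {a b : ℝ} (ha : 1 < a) (hb : 1 < b) : ∫ t, betaPDF a b t = 1 := by
  rw [pdf_eq, integral_indicator measurableSet_Ioo, integral_const_mul, ← Z_eq,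
    inv_mul_cancel₀ (Z_pos ha hb).ne']

lemma cdf_restrict (a b x : ℝ) :
    betaCDF a b x = (betaFn a b)⁻¹ * ∫ t in Set.Iic x ∩ Set.Ioo 0 1, f a b t := by
  rw [betaCDF, pdf_eq, setIntegral_indicator measurableSet_Ioo, integral_const_mul]

lemma cdf_of_ge_one {a b x : ℝ} (ha : 1 < a) (hb : 1 < b) (hx : 1 ≤ x) :
    betaCDF a b x = 1 := by
  have hint : Set.Iic x ∩ Set.Ioo 0 1 = Set.Ioo 0 1 :=
    Set.inter_eq_self_of_subset_right (fun t ht => le_trans ht.2.le hx)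
  rw [cdf_restrict, hint, ← Z_eq, inv_mul_cancel₀ (Z_pos ha hb).ne']

lemma tail_eq {a b x : ℝ} (ha : 1 < a) (hb : 1 < b) (hx0 : 0 < x) (hx1 : x < 1) :
    1 - betaCDF a b x = (betaFn a b)⁻¹ * ∫ t in Set.Ioo x 1, f a b t := by
  have hint : Set.Iic x ∩ Set.Ioo 0 1 = Set.Ioc 0 x := by
    ext t
    simp only [Set.mem_inter_iff, Set.mem_Iic, Set.mem_Ioo, Set.mem_Ioc]
    constructor
    · rintro ⟨h1, h2, h3⟩; exact ⟨h2, h1⟩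
    · rintro ⟨h1, h2⟩; exact ⟨h2, h1, lt_of_le_of_lt h2 hx1⟩
  have hsplit : (∫ t in Set.Ioc 0 x, f a b t) + ∫ t in Set.Ioo x 1, f a b t
      = ∫ t in Set.Ioo 0 1, f a b t := by
    rw [← setIntegral_union]
    · rw [Set.Ioc_union_Ioo_eq_Ioo hx0.le hx1]
    · exact (Set.Ioc_disjoint_Ioi_same.mono_right Set.Ioo_subset_Ioi_self)
    · exact measurableSet_Ioo
    · exact f_int ha hb measurableSet_Ioc (Set.Ioc_subset_Icc_self.trans
        (Set.Icc_subset_Icc le_rfl hx1.le))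
    · exact f_int ha hb measurableSet_Ioo
        (fun t ht => ⟨le_trans hx0.le ht.1.le, ht.2.le⟩)
  rw [cdf_restrict, hint]
  have hZ := (Z_pos ha hb).ne'
  rw [← Z_eq] at hsplit
  field_simp
  linarith [hsplit]

lemma r_hasDeriv {a b : ℝ} (ha : 1 < a) (hb : 1 < b) {t : ℝ} (ht0 : 0 < t) (ht1 : t < 1) :
    HasDerivAt (r a b)
      ((((a-1) * t ^ (a-1-1)) * (1-t) ^ (b-1) + t ^ (a-1) * (-1 * (b-1) * (1-t) ^ (b-1-1))) *
          Real.exp (2 * (a + b - 2) * (t - p a b) ^ 2) +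
        t ^ (a-1) * (1-t) ^ (b-1) *
          (Real.exp (2 * (a + b - 2) * (t - p a b) ^ 2) *
            (2 * (a + b - 2) * ((2:ℕ) * (t - p a b) ^ (2-1) * 1)))) t := by
  have h1 : HasDerivAt (fun s : ℝ => s ^ (a-1)) ((a-1) * t ^ (a-1-1)) t :=
    Real.hasDerivAt_rpow_const (Or.inl ht0.ne')
  have h2' : HasDerivAt (fun s : ℝ => 1 - s) (-1) t := by
    simpa using (hasDerivAt_id t).const_sub 1
  have h2 : HasDerivAt (fun s : ℝ => (1-s) ^ (b-1)) (-1 * (b-1) * (1-t) ^ (b-1-1)) t := by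
    have := h2'.rpow_const (p := b-1) (Or.inl (by linarith : (1:ℝ) - t ≠ 0))
    simpa [mul_assoc] using this
  have h3' : HasDerivAt (fun s : ℝ => 2 * (a + b - 2) * (s - p a b) ^ 2)
      (2 * (a + b - 2) * ((2:ℕ) * (t - p a b) ^ (2-1) * 1)) t :=
    (((hasDerivAt_id t).sub_const (p a b)).pow 2).const_mul (2 * (a + b - 2))
  have h3 : HasDerivAt (fun s : ℝ => Real.exp (2 * (a + b - 2) * (s - p a b) ^ 2))
      (Real.exp (2 * (a + b - 2) * (t - p a b) ^ 2) *
        (2 * (a + b - 2) * ((2:ℕ) * (t - p a b) ^ (2-1) * 1))) t := by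
    simpa [mul_comm] using h3'.exp
  have := (h1.mul h2).mul h3
  exact this

lemma r_pos {a b : ℝ} {t : ℝ} (h0 : 0 < t) (h1 : t < 1) : 0 < r a b t :=
  mul_pos (f_pos h0 h1) (Real.exp_pos _)

lemma r_antitone {a b : ℝ} (ha : 1 < a) (hb : 1 < b) :
    AntitoneOn (r a b) (Set.Ico (p a b) 1) := by
  have hn : (0:ℝ) < a + b - 2 := by linarith
  have hp0 := p_pos ha hb
  have hp1 := p_lt_one ha hb
  have hasD : ∀ t ∈ Set.Ioo (p a b) 1, HasDerivAt (r a b) _ t := fun t ht =>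
    r_hasDeriv ha hb (lt_trans hp0 ht.1) ht.2
  refine antitoneOn_of_deriv_nonpos (convex_Ico _ _) ?_ ?_ ?_
  · -- continuity
    refine continuousOn_of_forall_continuousAt fun t ht => ?_
    have ht0 : 0 < t := lt_of_lt_of_le hp0 ht.1
    have ht1 : t < 1 := ht.2
    exact ((r_hasDeriv ha hb ht0 ht1).continuousAt)
  · rw [interior_Ico]
    intro t ht
    exact ((r_hasDeriv ha hb (lt_trans hp0 ht.1) ht.2).differentiableAt).differentiableWithinAt
  · rw [interior_Ico]
    intro t ht
    have ht0 : 0 < t := lt_trans hp0 ht.1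
    have ht1 : t < 1 := ht.2
    have ht1' : (0:ℝ) < 1 - t := by linarith
    rw [(r_hasDeriv ha hb ht0 ht1).deriv]
    have hA : 0 < t ^ (a-1) := Real.rpow_pos_of_pos ht0 _
    have hB : 0 < (1-t) ^ (b-1) := Real.rpow_pos_of_pos ht1' _
    have hE : 0 < Real.exp (2 * (a + b - 2) * (t - p a b) ^ 2) := Real.exp_pos _
    have hq : p a b * (a + b - 2) = a - 1 := by
      rw [p]; field_simp
    have hnum : (a-1) * (1-t) - (b-1) * t
        + (2 * (a + b - 2) * (2 * (t - p a b))) * (t * (1-t)) ≤ 0 := by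
      nlinarith [mul_nonneg (mul_nonneg hn.le (sub_nonneg.2 ht.1.le))
        (sq_nonneg (2*t - 1))]
    have hsub1 : t ^ (a-1-1) = t ^ (a-1) / t := by
      rw [Real.rpow_sub ht0, Real.rpow_one]
    have hsub2 : (1-t) ^ (b-1-1) = (1-t) ^ (b-1) / (1-t) := by
      rw [Real.rpow_sub ht1', Real.rpow_one]
    rw [hsub1, hsub2]
    have hfactor : (((a-1) * (t ^ (a-1) / t)) * (1-t) ^ (b-1)
          + t ^ (a-1) * (-1 * (b-1) * ((1-t) ^ (b-1) / (1-t)))) *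
          Real.exp (2 * (a + b - 2) * (t - p a b) ^ 2) +
        t ^ (a-1) * (1-t) ^ (b-1) *
          (Real.exp (2 * (a + b - 2) * (t - p a b) ^ 2) *
            (2 * (a + b - 2) * ((2:ℕ) * (t - p a b) ^ (2-1) * 1)))
        = (t ^ (a-1) * (1-t) ^ (b-1) * Real.exp (2 * (a + b - 2) * (t - p a b) ^ 2)
            / (t * (1-t))) *
          ((a-1) * (1-t) - (b-1) * t
            + (2 * (a + b - 2) * (2 * (t - p a b))) * (t * (1-t))) := by
      field_simp
      ring
    rw [hfactor]
    exact mul_nonpos_of_nonneg_of_nonpos (by positivity) hnum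

lemma w_int_global {a b : ℝ} (ha : 1 < a) (hb : 1 < b) : Integrable (w a b) := by
  have h : Integrable (fun u : ℝ => Real.exp (-(2 * (a + b - 2)) * u ^ 2)) :=
    integrable_exp_neg_mul_sq (by linarith)
  have h2 := h.comp_sub_right (p a b)
  have hw : w a b = fun t => Real.exp (-(2 * (a + b - 2)) * (t - p a b) ^ 2) := rfl
  rw [hw]
  exact h2

lemma w_int {a b : ℝ} (ha : 1 < a) (hb : 1 < b) (x : ℝ) :
    IntegrableOn (w a b) (Set.Ioi x) :=
  (w_int_global ha hb).integrableOn

lemma w_nonneg (a b t : ℝ) : 0 ≤ w a b t := (Real.exp_pos _).le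

lemma W_shift {a b : ℝ} (x : ℝ) :
    W a b x = ∫ u in Set.Ioi (x - p a b), Real.exp (-(2 * (a + b - 2)) * u ^ 2) := by
  have hmp : MeasurePreserving (fun v : ℝ => v - p a b) volume volume :=
    measurePreserving_sub_right volume (p a b)
  have hemb : MeasurableEmbedding (fun v : ℝ => v - p a b) :=
    (MeasurableEquiv.subRight (p a b)).measurableEmbedding
  have hpre : (fun v : ℝ => v - p a b) ⁻¹' Set.Ioi (x - p a b) = Set.Ioi x := by
    ext v; simp [sub_lt_sub_iff_right]
  have hw : w a b = fun t => Real.exp (-(2 * (a + b - 2)) * (t - p a b) ^ 2) := rfl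
  rw [W, hw, ← hpre, hmp.setIntegral_preimage_emb hemb
    (fun u => Real.exp (-(2 * (a + b - 2)) * u ^ 2)) _]

lemma W_p {a b : ℝ} (ha : 1 < a) (hb : 1 < b) :
    W a b (p a b) = Real.sqrt (π / (2 * (a + b - 2))) / 2 := by
  rw [W_shift, sub_self]
  exact integral_gaussian_Ioi _

lemma W_pos {a b : ℝ} (ha : 1 < a) (hb : 1 < b) : 0 < W a b (p a b) := by
  rw [W_p ha hb]
  have h0 : (0:ℝ) < π / (2 * (a + b - 2)) := div_pos Real.pi_pos (by linarith)
  exact div_pos (Real.sqrt_pos.2 h0) two_pos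

lemma W_nonneg (a b x : ℝ) : 0 ≤ W a b x :=
  integral_nonneg fun t => w_nonneg a b t

lemma gauss_reflect (A : ℝ) (g : ℝ → ℝ) (hg : ∀ t, g (-t) = g t) :
    ∫ t in Set.Iic (-A), g t = ∫ t in Set.Ioi A, g t := by
  have h := integral_comp_neg_Iic (-A) g
  rw [neg_neg] at h
  rw [← h]
  exact setIntegral_congr_fun measurableSet_Iic fun t _ => (hg t).symm

lemma gauss_scale {B : ℝ} (hB : 0 < B) (A : ℝ) (g : ℝ → ℝ) :
    ∫ s in Set.Ioi (B * A), g s = B * ∫ u in Set.Ioi A, g (B * u) := by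
  rw [integral_comp_mul_left_Ioi g A hB, smul_eq_mul, ← mul_assoc,
    mul_inv_cancel₀ hB.ne', one_mul]

lemma W_std {a b : ℝ} (ha : 1 < a) (hb : 1 < b) (x : ℝ) :
    stdNormalCDF (-2 * Real.sqrt (a + b - 2) * (x - p a b))
      = (Real.sqrt (2 * π))⁻¹ * (2 * Real.sqrt (a + b - 2)) * W a b x := by
  have hn : (0:ℝ) < a + b - 2 := by linarith
  have hc : (0:ℝ) < 2 * Real.sqrt (a + b - 2) := by positivity
  have hc2 : (2 * Real.sqrt (a + b - 2)) ^ 2 = 4 * (a + b - 2) := by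
    rw [mul_pow, Real.sq_sqrt hn.le]; ring
  have harg : -2 * Real.sqrt (a + b - 2) * (x - p a b)
      = -(2 * Real.sqrt (a + b - 2) * (x - p a b)) := by ring
  rw [stdNormalCDF, harg]
  have h1 : (∫ t in Set.Iic (-(2 * Real.sqrt (a + b - 2) * (x - p a b))),
        (Real.sqrt (2 * π))⁻¹ * Real.exp (-t ^ 2 / 2))
      = ∫ s in Set.Ioi (2 * Real.sqrt (a + b - 2) * (x - p a b)),
        (Real.sqrt (2 * π))⁻¹ * Real.exp (-s ^ 2 / 2) :=
    gauss_reflect _ _ (fun t => by rw [neg_sq])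
  rw [h1, gauss_scale hc (x - p a b) _]
  have h2 : ∀ u : ℝ, (Real.sqrt (2 * π))⁻¹ *
        Real.exp (-(2 * Real.sqrt (a + b - 2) * u) ^ 2 / 2)
      = (Real.sqrt (2 * π))⁻¹ * Real.exp (-(2 * (a + b - 2)) * u ^ 2) := by
    intro u
    congr 1
    rw [mul_pow, hc2]
    ring
  rw [setIntegral_congr_fun measurableSet_Ioi (fun u _ => h2 u), integral_const_mul,
    ← W_shift x]
  ring

lemma stdNormalCDF_nonneg (z : ℝ) : 0 ≤ stdNormalCDF z := by
  refine integral_nonneg fun t => ?_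
  positivity

lemma upper_tail {a b : ℝ} (ha : 1 < a) (hb : 1 < b) {x : ℝ} (hx : p a b ≤ x) :
    1 - betaCDF a b x ≤
      2 * stdNormalCDF (-2 * Real.sqrt (a + b - 2) * (x - p a b)) := by
  have hn : (0:ℝ) < a + b - 2 := by linarith
  have hp0 := p_pos ha hb
  have hp1 := p_lt_one ha hb
  rcases le_or_gt 1 x with h1 | h1
  · rw [cdf_of_ge_one ha hb h1]
    simp only [sub_self]
    exact mul_nonneg (by norm_num) (stdNormalCDF_nonneg _)
  -- main case : p ≤ x < 1
  have hx0 : 0 < x := lt_of_lt_of_le hp0 hx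
  have hZ := Z_pos ha hb
  set q := p a b with hqdef
  set T := ∫ t in Set.Ioo x 1, f a b t with hT
  set S := ∫ t in Set.Ioc q x, f a b t with hS
  set I := ∫ v in Set.Ioc q x, w a b v with hI
  set Wx := W a b x with hWx
  -- nonnegativity
  have hT0 : 0 ≤ T := setIntegral_nonneg measurableSet_Ioo
    (fun t ht => f_nonneg (by linarith [ht.1, hx0] : (0:ℝ) ≤ t) ht.2.le)
  have hI0 : 0 ≤ I := setIntegral_nonneg measurableSet_Ioc (fun t _ => w_nonneg a b t)
  have hWx0 : 0 ≤ Wx := W_nonneg a b x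
  have hr0 : 0 ≤ r a b x := (r_pos hx0 h1).le
  -- key1 : T ≤ r a b x * Wx
  have hmem_x : x ∈ Set.Ico q 1 := ⟨hx, h1⟩
  have key1 : T ≤ r a b x * Wx := by
    have step1 : T ≤ ∫ t in Set.Ioo x 1, r a b x * w a b t := by
      refine setIntegral_mono_on ?_ ?_ measurableSet_Ioo ?_
      · exact f_int ha hb measurableSet_Ioo (fun t ht => ⟨by linarith [ht.1], ht.2.le⟩)
      · exact ((w_int ha hb x).mono_set Set.Ioo_subset_Ioi_self).const_mul _
      · intro t ht
        rw [f_eq_r_mul_w]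
        exact mul_le_mul_of_nonneg_right
          (r_antitone ha hb hmem_x ⟨le_trans hx ht.1.le, ht.2⟩ ht.1.le) (w_nonneg a b t)
    have step2 : (∫ t in Set.Ioo x 1, r a b x * w a b t) ≤ r a b x * Wx := by
      rw [integral_const_mul]
      refine mul_le_mul_of_nonneg_left ?_ hr0
      exact setIntegral_mono_set (w_int ha hb x) (ae_of_all _ (w_nonneg a b))
        (HasSubset.Subset.eventuallyLE Set.Ioo_subset_Ioi_self)
    linarith
  -- key2 : r a b x * I ≤ S
  have key2 : r a b x * I ≤ S := by
    rw [hI, ← integral_const_mul]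
    refine setIntegral_mono_on ?_ ?_ measurableSet_Ioc ?_
    · exact ((w_int_global ha hb).integrableOn).const_mul _
    · exact f_int ha hb measurableSet_Ioc
        (fun t ht => ⟨by linarith [ht.1, hp0], by linarith [ht.2, h1]⟩)
    · intro t ht
      rw [f_eq_r_mul_w]
      exact mul_le_mul_of_nonneg_right
        (r_antitone ha hb ⟨ht.1.le, by linarith [ht.2]⟩ hmem_x ht.2) (w_nonneg a b t)
  -- key3 : S + T ≤ betaFn a b
  have key3 : S + T ≤ betaFn a b := by
    have hsplit : (∫ t in Set.Ioc 0 x, f a b t) + T = ∫ t in Set.Ioo 0 1, f a b t := by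
      rw [hT, ← setIntegral_union
        (Set.Ioc_disjoint_Ioi_same.mono_right Set.Ioo_subset_Ioi_self) measurableSet_Ioo
        (f_int ha hb measurableSet_Ioc (Set.Ioc_subset_Icc_self.trans
          (Set.Icc_subset_Icc le_rfl h1.le)))
        (f_int ha hb measurableSet_Ioo (fun t ht => ⟨by linarith [ht.1], ht.2.le⟩)),
        Set.Ioc_union_Ioo_eq_Ioo hx0.le h1]
    have hmono : S ≤ ∫ t in Set.Ioc 0 x, f a b t := by
      refine setIntegral_mono_set (f_int ha hb measurableSet_Ioc
        (Set.Ioc_subset_Icc_self.trans (Set.Icc_subset_Icc le_rfl h1.le))) ?_ ?_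
      · refine (ae_restrict_iff' measurableSet_Ioc).2 (ae_of_all _ fun t ht => ?_)
        exact f_nonneg ht.1.le (by linarith [ht.2])
      · exact HasSubset.Subset.eventuallyLE (Set.Ioc_subset_Ioc_left hp0.le)
    rw [Z_eq]
    linarith
  -- key4 : W q = I + Wx
  have key4 : W a b q = I + Wx := by
    rw [hI, hWx, W, W, ← setIntegral_union (Set.Ioc_disjoint_Ioi le_rfl) measurableSet_Ioi
      ((w_int_global ha hb).integrableOn) ((w_int_global ha hb).integrableOn),
      Set.Ioc_union_Ioi_eq_Ioi hx]
  have hWq : 0 < W a b q := W_pos ha hb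
  -- combine
  have hchain : T * W a b q ≤ Wx * betaFn a b := by
    have h5 : T * I ≤ (r a b x * Wx) * I := mul_le_mul_of_nonneg_right key1 hI0
    have h7 : Wx * (r a b x * I) ≤ Wx * S := mul_le_mul_of_nonneg_left key2 hWx0
    have h8 : T * Wx ≤ Wx * T := by linarith [mul_comm T Wx]
    nlinarith [key3, hWx0, hT0]
  have htail := tail_eq ha hb hx0 h1
  rw [← hT] at htail
  rw [htail]
  have hdiv : (betaFn a b)⁻¹ * T ≤ Wx / W a b q := by
    rw [inv_mul_eq_div, div_le_div_iff₀ hZ hWq]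
    linarith [hchain]
  refine le_trans hdiv ?_
  rw [W_std ha hb x, ← hWx, W_p ha hb]
  have hπ : (0:ℝ) < Real.sqrt π := Real.sqrt_pos.2 Real.pi_pos
  have h2s : (0:ℝ) < Real.sqrt 2 := by positivity
  have hns : (0:ℝ) < Real.sqrt (a + b - 2) := Real.sqrt_pos.2 hn
  have hd : Real.sqrt (π / (2 * (a + b - 2)))
      = Real.sqrt π / (Real.sqrt 2 * Real.sqrt (a + b - 2)) := by
    rw [Real.sqrt_div Real.pi_pos.le, Real.sqrt_mul (by norm_num : (0:ℝ) ≤ 2)]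
  have h2π : Real.sqrt (2 * π) = Real.sqrt 2 * Real.sqrt π :=
    Real.sqrt_mul (by norm_num) _
  rw [hd, h2π]
  refine le_of_eq ?_
  field_simp
  have h22 : Real.sqrt 2 * Real.sqrt 2 = 2 := Real.mul_self_sqrt (by norm_num)
  linear_combination Wx * h22

lemma betaFn_symm (a b : ℝ) : betaFn a b = betaFn b a := by
  have h := intervalIntegral.integral_comp_sub_left
    (a := 0) (b := 1) (fun t => t ^ (b - 1) * (1 - t) ^ (a - 1)) 1
  simp only [sub_zero, sub_self] at h
  rw [betaFn, betaFn, ← h]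
  refine intervalIntegral.integral_congr fun t ht => ?_
  simp only [sub_sub_cancel]
  ring

lemma pdf_reflect (a b t : ℝ) : betaPDF a b t = betaPDF b a (1 - t) := by
  rw [betaPDF, betaPDF]
  by_cases h : 0 < t ∧ t < 1
  · rw [if_pos h, if_pos (by constructor <;> [linarith [h.2]; linarith [h.1]]),
      sub_sub_cancel, betaFn_symm]
    ring
  · rw [if_neg h, if_neg ?_]
    intro h2
    exact h ⟨by linarith [h2.2], by linarith [h2.1]⟩

lemma cdf_reflect {a b : ℝ} (ha : 1 < a) (hb : 1 < b) (x : ℝ) :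
    betaCDF a b x = 1 - betaCDF b a (1 - x) := by
  have hmp : MeasurePreserving (fun t : ℝ => 1 - t) volume volume :=
    Measure.measurePreserving_sub_left volume 1
  have hemb : MeasurableEmbedding (fun t : ℝ => 1 - t) :=
    (MeasurableEquiv.subLeft (1:ℝ)).measurableEmbedding
  have hpre : (fun t : ℝ => 1 - t) ⁻¹' Set.Ici (1 - x) = Set.Iic x := by
    ext t; simp [sub_le_sub_iff_left]
  have h1 : betaCDF a b x = ∫ t in Set.Ici (1-x), betaPDF b a t := by
    rw [betaCDF, ← hmp.setIntegral_preimage_emb hemb (betaPDF b a) (Set.Ici (1-x)), hpre]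
    exact setIntegral_congr_fun measurableSet_Iic fun t _ => pdf_reflect a b t
  have h2 : (∫ t in Set.Iic (1-x), betaPDF b a t) + ∫ t in Set.Ioi (1-x), betaPDF b a t
      = 1 := by
    rw [← pdf_total hb ha (a := b) (b := a)]
    rw [← setIntegral_union (Set.Iic_disjoint_Ioi le_rfl) measurableSet_Ioi
      ((pdf_int hb ha).integrableOn) ((pdf_int hb ha).integrableOn), Set.Iic_union_Ioi,
      setIntegral_univ]
  rw [h1, integral_Ici_eq_integral_Ioi, betaCDF]
  linarith [h2]

end BetaTail

theorem beta_gaussian_tail_bounds (a b : ℝ) (ha : 1 < a) (hb : 1 < b) :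
    (∀ x : ℝ, (a - 1) / (a + b - 2) ≤ x →
      1 - betaCDF a b x ≤
        2 * stdNormalCDF (-2 * Real.sqrt (a + b - 2) * (x - (a - 1) / (a + b - 2)))) ∧
    (∀ x : ℝ, x ≤ (a - 1) / (a + b - 2) →
      betaCDF a b x ≤
        2 * stdNormalCDF (2 * Real.sqrt (a + b - 2) * (x - (a - 1) / (a + b - 2)))) := by
  have hn : (0:ℝ) < a + b - 2 := by linarith
  constructor
  · intro x hx
    exact BetaTail.upper_tail ha hb hx
  · intro x hx
    have hsum : (a - 1) / (a + b - 2) + (b - 1) / (a + b - 2) = 1 := by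
      field_simp
      ring
    have hba : b + a - 2 = a + b - 2 := by ring
    have hx' : BetaTail.p b a ≤ 1 - x := by
      rw [BetaTail.p, hba]
      linarith
    have h := BetaTail.upper_tail hb ha hx'
    rw [BetaTail.cdf_reflect ha hb x]
    have harg : -2 * Real.sqrt (b + a - 2) * (1 - x - BetaTail.p b a)
        = 2 * Real.sqrt (a + b - 2) * (x - (a - 1) / (a + b - 2)) := by
      rw [BetaTail.p, hba]
      linear_combination (2 * Real.sqrt (a + b - 2)) * hsum
    rw [harg] at h
    exact h
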